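/- Let C be a strict monoidal category with a pure-braided structure (A, B) (two families of natural isomorphisms A_{U,V,W}, B_{U,V,W} : U⊗V⊗W → U⊗V⊗W satisfying the pure-braided axioms). Then A_{I,U,V} = A_{U,V,I} = id_{U⊗V} and B_{I,U,V} = B_{U,V,I} = id_{U⊗V} for all objects U, V. -/

import Mathlib

open CategoryTheory MonoidalCategory

universe v u

/-- A monoidal category is strict when the associators and unitors are `eqToHom`s of
equalities of objects. -/
structure MonStrict (C : Type u) [Category.{v} C] [MonoidalCategory C] : Prop where
  assocObj : ∀ X Y Z : C, (X ⊗ Y) ⊗ Z = X ⊗ (Y ⊗ Z)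
  lidObj : ∀ X : C, 𝟙_ C ⊗ X = X
  ridObj : ∀ X : C, X ⊗ 𝟙_ C = X
  assocHom : ∀ X Y Z : C, (α_ X Y Z).hom = eqToHom (assocObj X Y Z)
  lidHom : ∀ X : C, (λ_ X).hom = eqToHom (lidObj X)
  ridHom : ∀ X : C, (ρ_ X).hom = eqToHom (ridObj X)

variable {C : Type u} [Category.{v} C] [MonoidalCategory C]

/-- Transport of an endomorphism along an equality of objects of a strict monoidal
category. -/
def cE {X Y : C} (h : X = Y) (f : Y ⟶ Y) : X ⟶ X := eqToHom h ≫ f ≫ eqToHom h.symm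

/-- A pure-braided structure on a strict monoidal category: two families of natural
isomorphisms `A, B : U ⊗ V ⊗ W ≅ U ⊗ V ⊗ W` satisfying the pure-braided axioms. -/
structure PureBraided (C : Type u) [Category.{v} C] [MonoidalCategory C]
    (hS : MonStrict C) where
  A : ∀ U V W : C, U ⊗ (V ⊗ W) ≅ U ⊗ (V ⊗ W)
  B : ∀ U V W : C, U ⊗ (V ⊗ W) ≅ U ⊗ (V ⊗ W)
  natA : ∀ {U V W U' V' W' : C} (f : U ⟶ U') (g : V ⟶ V') (h : W ⟶ W'),
    (f ⊗ₘ (g ⊗ₘ h)) ≫ (A U' V' W').hom = (A U V W).hom ≫ (f ⊗ₘ (g ⊗ₘ h))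
  natB : ∀ {U V W U' V' W' : C} (f : U ⟶ U') (g : V ⟶ V') (h : W ⟶ W'),
    (f ⊗ₘ (g ⊗ₘ h)) ≫ (B U' V' W').hom = (B U V W).hom ≫ (f ⊗ₘ (g ⊗ₘ h))
  /-- `A_{U⊗V,W,X} = A_{U,V⊗W,X}(id_U ⊗ A_{V,W,X})` -/
  a1 : ∀ U V W X : C, (A (U ⊗ V) W X).hom =
    cE (by simp [hS.assocObj]) ((𝟙 U ⊗ₘ (A V W X).hom) ≫
      cE (by simp [hS.assocObj]) (A U (V ⊗ W) X).hom)
  /-- `A_{U,V,W⊗X} = (A_{U,V,W} ⊗ id_X) A_{U,V⊗W,X}` -/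
  a2 : ∀ U V W X : C, (A U V (W ⊗ X)).hom =
    cE (by simp [hS.assocObj]) ((cE (by simp [hS.assocObj]) (A U (V ⊗ W) X).hom) ≫
      ((A U V W).hom ⊗ₘ 𝟙 X))
  /-- `B_{U⊗V,W,X} = (id_U ⊗ B_{V,W,X}) B_{U,V⊗W,X}` -/
  baba : ∀ U V W X : C, (B (U ⊗ V) W X).hom =
    cE (by simp [hS.assocObj]) ((cE (by simp [hS.assocObj]) (B U (V ⊗ W) X).hom) ≫
      (𝟙 U ⊗ₘ (B V W X).hom))
  /-- `B_{U,V,W⊗X} = B_{U,V⊗W,X}(B_{U,V,W} ⊗ id_X)` -/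
  b2 : ∀ U V W X : C, (B U V (W ⊗ X)).hom =
    cE (by simp [hS.assocObj]) (((B U V W).hom ⊗ₘ 𝟙 X) ≫
      cE (by simp [hS.assocObj]) (B U (V ⊗ W) X).hom)
  /-- `(A_{U,V,W} ⊗ id_X)(id_U ⊗ B_{V,W,X}) = (id_U ⊗ B_{V,W,X})(A_{U,V,W} ⊗ id_X)` -/
  cab : ∀ U V W X : C,
    cE (by simp [hS.assocObj]) (𝟙 U ⊗ₘ (B V W X).hom) ≫ ((A U V W).hom ⊗ₘ 𝟙 X)
    = ((A U V W).hom ⊗ₘ 𝟙 X) ≫ cE (by simp [hS.assocObj]) (𝟙 U ⊗ₘ (B V W X).hom)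
  /-- `A_{U,I,V} = B_{U,I,V}` -/
  t1t : ∀ U V : C, A U (𝟙_ C) V = B U (𝟙_ C) V

/-- A twine on a strict monoidal category. -/
structure Twine (C : Type u) [Category.{v} C] [MonoidalCategory C]
    (hS : MonStrict C) where
  D : ∀ X Y : C, X ⊗ Y ≅ X ⊗ Y
  nat : ∀ {X Y X' Y' : C} (f : X ⟶ X') (g : Y ⟶ Y'),
    (f ⊗ₘ g) ≫ (D X' Y').hom = (D X Y).hom ≫ (f ⊗ₘ g)
  unit : (D (𝟙_ C) (𝟙_ C)).hom = 𝟙 (𝟙_ C ⊗ 𝟙_ C)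
  /-- `(D_{X,Y} ⊗ id_Z) D_{X⊗Y,Z} = (id_X ⊗ D_{Y,Z}) D_{X,Y⊗Z}` -/
  fus : ∀ X Y Z : C, (D (X ⊗ Y) Z).hom ≫ ((D X Y).hom ⊗ₘ 𝟙 Z)
    = cE (by simp [hS.assocObj]) ((D X (Y ⊗ Z)).hom ≫ (𝟙 X ⊗ₘ (D Y Z).hom))
  /-- the entwining axiom -/
  ent : ∀ X Y Z T : C,
    cE (by simp [hS.assocObj]) (𝟙 X ⊗ₘ (D Y (Z ⊗ T)).hom) ≫
      cE (by simp [hS.assocObj]) (𝟙 X ⊗ₘ ((D Y Z).inv ⊗ₘ 𝟙 T)) ≫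
        ((D (X ⊗ Y) Z).hom ⊗ₘ 𝟙 T)
    = ((D (X ⊗ Y) Z).hom ⊗ₘ 𝟙 T) ≫
        cE (by simp [hS.assocObj]) (𝟙 X ⊗ₘ ((D Y Z).inv ⊗ₘ 𝟙 T)) ≫
          cE (by simp [hS.assocObj]) (𝟙 X ⊗ₘ (D Y (Z ⊗ T)).hom)

/-- A strong twine on a strict monoidal category. -/
structure StrongTwine (C : Type u) [Category.{v} C] [MonoidalCategory C]
    (hS : MonStrict C) where
  D : ∀ X Y : C, X ⊗ Y ≅ X ⊗ Y
  nat : ∀ {X Y X' Y' : C} (f : X ⟶ X') (g : Y ⟶ Y'),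
    (f ⊗ₘ g) ≫ (D X' Y').hom = (D X Y).hom ≫ (f ⊗ₘ g)
  unit : (D (𝟙_ C) (𝟙_ C)).hom = 𝟙 (𝟙_ C ⊗ 𝟙_ C)
  /-- `(T_{U,V} ⊗ id_W) T_{U⊗V,W} = (id_U ⊗ T_{V,W}) T_{U,V⊗W}` -/
  fus : ∀ X Y Z : C, (D (X ⊗ Y) Z).hom ≫ ((D X Y).hom ⊗ₘ 𝟙 Z)
    = cE (by simp [hS.assocObj]) ((D X (Y ⊗ Z)).hom ≫ (𝟙 X ⊗ₘ (D Y Z).hom))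
  /-- `(T_{U,V} ⊗ id_W)(id_U ⊗ T_{V,W}) = (id_U ⊗ T_{V,W})(T_{U,V} ⊗ id_W)` -/
  comm : ∀ X Y Z : C,
    cE (by simp [hS.assocObj]) (𝟙 X ⊗ₘ (D Y Z).hom) ≫ ((D X Y).hom ⊗ₘ 𝟙 Z)
    = ((D X Y).hom ⊗ₘ 𝟙 Z) ≫ cE (by simp [hS.assocObj]) (𝟙 X ⊗ₘ (D Y Z).hom)

/-- A D-structure (consisting of isomorphisms) on a strict monoidal category. -/
structure DStructure (C : Type u) [Category.{v} C] [MonoidalCategory C]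
    (hS : MonStrict C) where
  R : ∀ X : C, X ≅ X
  nat : ∀ {X Y : C} (f : X ⟶ Y), f ≫ (R Y).hom = (R X).hom ≫ f
  unit : (R (𝟙_ C)).hom = 𝟙 (𝟙_ C)
  /-- `(R_{X⊗Y} ⊗ id_Z)(id_X ⊗ R_{Y⊗Z}) = (id_X ⊗ R_{Y⊗Z})(R_{X⊗Y} ⊗ id_Z)` -/
  comm : ∀ X Y Z : C,
    cE (by simp [hS.assocObj]) (𝟙 X ⊗ₘ (R (Y ⊗ Z)).hom) ≫ ((R (X ⊗ Y)).hom ⊗ₘ 𝟙 Z)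
    = ((R (X ⊗ Y)).hom ⊗ₘ 𝟙 Z) ≫ cE (by simp [hS.assocObj]) (𝟙 X ⊗ₘ (R (Y ⊗ Z)).hom)

section Aux

lemma tens_eqToHom' {W X Y Z : C} (h : W = X) (h' : Y = Z) :
    (eqToHom h ⊗ₘ eqToHom h') = eqToHom (by rw [h, h']) := by
  subst h; subst h'; simp

lemma lunit' (hS : MonStrict C) {X Y : C} (f : X ⟶ Y) :
    (𝟙 (𝟙_ C) ⊗ₘ f) = eqToHom (hS.lidObj X) ≫ f ≫ eqToHom (hS.lidObj Y).symm := by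
  have h := MonoidalCategory.leftUnitor_naturality f
  rw [hS.lidHom, hS.lidHom] at h
  rw [MonoidalCategory.id_tensorHom]
  calc (𝟙_ C ◁ f)
      = ((𝟙_ C ◁ f) ≫ eqToHom (hS.lidObj Y)) ≫ eqToHom (hS.lidObj Y).symm := by
        simp
    _ = _ := by rw [h]; simp

lemma runit' (hS : MonStrict C) {X Y : C} (f : X ⟶ Y) :
    (f ⊗ₘ 𝟙 (𝟙_ C)) = eqToHom (hS.ridObj X) ≫ f ≫ eqToHom (hS.ridObj Y).symm := by
  have h := MonoidalCategory.rightUnitor_naturality f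
  rw [hS.ridHom, hS.ridHom] at h
  rw [MonoidalCategory.tensorHom_id]
  calc (f ▷ 𝟙_ C)
      = ((f ▷ 𝟙_ C) ≫ eqToHom (hS.ridObj Y)) ≫ eqToHom (hS.ridObj Y).symm := by
        simp
    _ = _ := by rw [h]; simp

/-- naturality in the first slot along an `eqToHom` -/
lemma natA1 (hS : MonStrict C) (P : PureBraided C hS) {U U' : C} (h : U = U') (V W : C) :
    (P.A U' V W).hom
      = eqToHom (by rw [h]) ≫ (P.A U V W).hom ≫ eqToHom (by rw [h]) := by
  subst h; simp

lemma natA2 (hS : MonStrict C) (P : PureBraided C hS) (U : C) {V V' : C} (h : V = V') (W : C) :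
    (P.A U V' W).hom
      = eqToHom (by rw [h]) ≫ (P.A U V W).hom ≫ eqToHom (by rw [h]) := by
  subst h; simp

lemma natA3 (hS : MonStrict C) (P : PureBraided C hS) (U V : C) {W W' : C} (h : W = W') :
    (P.A U V W').hom
      = eqToHom (by rw [h]) ≫ (P.A U V W).hom ≫ eqToHom (by rw [h]) := by
  subst h; simp

lemma natB1 (hS : MonStrict C) (P : PureBraided C hS) {U U' : C} (h : U = U') (V W : C) :
    (P.B U' V W).hom
      = eqToHom (by rw [h]) ≫ (P.B U V W).hom ≫ eqToHom (by rw [h]) := by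
  subst h; simp

lemma natB2 (hS : MonStrict C) (P : PureBraided C hS) (U : C) {V V' : C} (h : V = V') (W : C) :
    (P.B U V' W).hom
      = eqToHom (by rw [h]) ≫ (P.B U V W).hom ≫ eqToHom (by rw [h]) := by
  subst h; simp

lemma natB3 (hS : MonStrict C) (P : PureBraided C hS) (U V : C) {W W' : C} (h : W = W') :
    (P.B U V W').hom
      = eqToHom (by rw [h]) ≫ (P.B U V W).hom ≫ eqToHom (by rw [h]) := by
  subst h; simp

lemma A_left_tensor (hS : MonStrict C) (P : PureBraided C hS) (V W X : C) :
    (P.A (𝟙_ C) (V ⊗ W) X).hom = 𝟙 _ := by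
  have h1 := P.a1 (𝟙_ C) V W X
  rw [natA1 hS P (hS.lidObj V).symm W X] at h1
  rw [lunit' hS (P.A V W X).hom] at h1
  simp only [cE] at h1
  simp only [Category.assoc, eqToHom_trans, eqToHom_trans_assoc, eqToHom_refl,
    Category.id_comp, Category.comp_id] at h1
  -- now h1 should have the form A = A ≫ (eqToHom ≫ A' ≫ eqToHom)
  rw [eqToHom_comp_iff] at h1
  simp only [eqToHom_trans_assoc, eqToHom_refl, Category.id_comp] at h1
  rw [cancel_epi] at h1
  replace h1 := h1.symm
  rw [eqToHom_comp_iff, comp_eqToHom_iff] at h1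
  rw [h1]
  simp

lemma A_right_tensor (hS : MonStrict C) (P : PureBraided C hS) (U V W : C) :
    (P.A U (V ⊗ W) (𝟙_ C)).hom = 𝟙 _ := by
  have h1 := P.a2 U V W (𝟙_ C)
  rw [natA3 hS P U V (hS.ridObj W).symm] at h1
  rw [runit' hS (P.A U V W).hom] at h1
  simp only [cE] at h1
  simp only [Category.assoc, eqToHom_trans, eqToHom_trans_assoc, eqToHom_refl,
    Category.id_comp, Category.comp_id] at h1
  rw [eqToHom_comp_iff] at h1
  simp only [eqToHom_trans_assoc, eqToHom_refl, Category.id_comp] at h1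
  rw [comp_eqToHom_iff] at h1
  simp only [Category.assoc, eqToHom_trans, eqToHom_refl, Category.comp_id] at h1
  have h2 := congrArg (fun f => f ≫ (P.A U V W).inv) h1
  simp only [Category.assoc, Iso.hom_inv_id, Category.comp_id] at h2
  replace h2 := h2.symm
  rw [eqToHom_comp_iff, comp_eqToHom_iff] at h2
  rw [h2]
  simp

lemma B_left_tensor (hS : MonStrict C) (P : PureBraided C hS) (V W X : C) :
    (P.B (𝟙_ C) (V ⊗ W) X).hom = 𝟙 _ := by
  have h1 := P.baba (𝟙_ C) V W X
  rw [natB1 hS P (hS.lidObj V).symm W X] at h1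
  rw [lunit' hS (P.B V W X).hom] at h1
  simp only [cE] at h1
  simp only [Category.assoc, eqToHom_trans, eqToHom_trans_assoc, eqToHom_refl,
    Category.id_comp, Category.comp_id] at h1
  rw [eqToHom_comp_iff] at h1
  simp only [eqToHom_trans_assoc, eqToHom_refl, Category.id_comp] at h1
  rw [comp_eqToHom_iff] at h1
  simp only [Category.assoc, eqToHom_trans, eqToHom_refl, Category.comp_id] at h1
  have h2 := congrArg (fun f => f ≫ (P.B V W X).inv) h1
  simp only [Category.assoc, Iso.hom_inv_id, Category.comp_id] at h2
  replace h2 := h2.symm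
  rw [eqToHom_comp_iff, comp_eqToHom_iff] at h2
  rw [h2]
  simp

lemma B_right_tensor (hS : MonStrict C) (P : PureBraided C hS) (U V W : C) :
    (P.B U (V ⊗ W) (𝟙_ C)).hom = 𝟙 _ := by
  have h1 := P.b2 U V W (𝟙_ C)
  rw [natB3 hS P U V (hS.ridObj W).symm] at h1
  rw [runit' hS (P.B U V W).hom] at h1
  simp only [cE] at h1
  simp only [Category.assoc, eqToHom_trans, eqToHom_trans_assoc, eqToHom_refl,
    Category.id_comp, Category.comp_id] at h1
  rw [eqToHom_comp_iff] at h1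
  simp only [eqToHom_trans_assoc, eqToHom_refl, Category.id_comp] at h1
  rw [cancel_epi] at h1
  replace h1 := h1.symm
  rw [eqToHom_comp_iff, comp_eqToHom_iff] at h1
  rw [h1]
  simp

end Aux

/-- In a pure-braided strict monoidal category, `A_{I,U,V} = A_{U,V,I} = id` and
`B_{I,U,V} = B_{U,V,I} = id`. -/
theorem stmt7 (hS : MonStrict C) (P : PureBraided C hS) (U V : C) :
    (P.A (𝟙_ C) U V).hom = 𝟙 (𝟙_ C ⊗ (U ⊗ V)) ∧
    (P.A U V (𝟙_ C)).hom = 𝟙 (U ⊗ (V ⊗ 𝟙_ C)) ∧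
    (P.B (𝟙_ C) U V).hom = 𝟙 (𝟙_ C ⊗ (U ⊗ V)) ∧
    (P.B U V (𝟙_ C)).hom = 𝟙 (U ⊗ (V ⊗ 𝟙_ C)) := by
  refine ⟨?_, ?_, ?_, ?_⟩
  · rw [natA2 hS P (𝟙_ C) (hS.lidObj U) V, A_left_tensor hS P]
    simp
  · rw [natA2 hS P U (hS.ridObj V) (𝟙_ C), A_right_tensor hS P]
    simp
  · rw [natB2 hS P (𝟙_ C) (hS.lidObj U) V, B_left_tensor hS P]
    simp
  · rw [natB2 hS P U (hS.ridObj V) (𝟙_ C), B_right_tensor hS P]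
    simp
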